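/- Vanishing of the low-order bits in lopsided division: let a b : ℤ with b odd, and let c, r : ℕ → ℤ be the lopsided-division sequences for a and b. Then for every i : ℕ, the integer 2^i divides both c i and r i; consequently the sequences ((c i : ℤ_[2]))_i and ((r i : ℤ_[2]))_i (images under the coercion ℤ → ℤ_[2]) both tend to 0 in ℤ_[2] as i → ∞ (in particular the borrow sequence converges to 0, as asserted in the lopsided division theorem). -/

import Mathlib

instance : XorOp ℤ := ⟨Int.xor⟩
instance : AndOp ℤ := ⟨Int.land⟩

private lemma int_xor_def (x y : ℤ) : x ^^^ y = Int.xor x y := rfl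
private lemma int_and_def (x y : ℤ) : x &&& y = Int.land x y := rfl

private lemma int_not_eq_lnot (n : ℤ) : (~~~ n) = Int.lnot n := by
  unfold Int.lnot; cases n <;> simp [Int.not] <;> rfl

private lemma int_testBit_zero' (n : ℤ) : n.testBit 0 = n.bodd := by
  conv_lhs => rw [← Int.bit_decomp n]
  rw [Int.testBit_bit_zero]

private lemma int_testBit_succ' (n : ℤ) (k : ℕ) :
    n.testBit (k + 1) = (Int.div2 n).testBit k := by
  conv_lhs => rw [← Int.bit_decomp n]
  exact Int.testBit_bit_succ k _ _

private lemma int_testBit_two_mul_zero (m : ℤ) : (2 * m).testBit 0 = false := by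
  have : (2 * m) = Int.bit false m := by rw [Int.bit_val]; simp
  rw [this, Int.testBit_bit_zero]

private lemma int_testBit_two_mul_succ (m : ℤ) (k : ℕ) :
    (2 * m).testBit (k + 1) = m.testBit k := by
  have : (2 * m) = Int.bit false m := by rw [Int.bit_val]; simp
  rw [this]; exact Int.testBit_bit_succ k _ _

private lemma int_testBit_zero_int (j : ℕ) : (0 : ℤ).testBit j = false := by
  show Int.testBit ((0 : ℕ) : ℤ) j = false
  simp [Int.testBit]

private lemma int_testBit_pow_mul_lt (i : ℕ) (m : ℤ) :
    ∀ j < i, ((2 : ℤ) ^ i * m).testBit j = false := by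
  induction i generalizing m with
  | zero => intro j hj; omega
  | succ i ih =>
    intro j hj
    have h2 : (2 : ℤ) ^ (i + 1) * m = 2 * ((2 : ℤ) ^ i * m) := by ring
    rw [h2]
    cases j with
    | zero => exact int_testBit_two_mul_zero _
    | succ k =>
      rw [int_testBit_two_mul_succ]
      exact ih m k (by omega)

private lemma int_testBit_pow_mul_self (i : ℕ) (m : ℤ) :
    ((2 : ℤ) ^ i * m).testBit i = m.bodd := by
  induction i generalizing m with
  | zero => simpa using int_testBit_zero' m
  | succ i ih =>
    have h2 : (2 : ℤ) ^ (i + 1) * m = 2 * ((2 : ℤ) ^ i * m) := by ring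
    rw [h2, int_testBit_two_mul_succ, ih]

private lemma int_two_pow_dvd_of_testBit (i : ℕ) (n : ℤ)
    (h : ∀ j < i, n.testBit j = false) : (2 : ℤ) ^ i ∣ n := by
  induction i generalizing n with
  | zero => simp
  | succ i ih =>
    have hb : n.bodd = false := by rw [← int_testBit_zero']; exact h 0 (by omega)
    have hn : n = 2 * Int.div2 n := by
      conv_lhs => rw [← Int.bit_decomp n]
      rw [hb, Int.bit_val]; simp
    have hd : (2 : ℤ) ^ i ∣ Int.div2 n := by
      apply ih
      intro j hj
      have := h (j + 1) (by omega)
      rwa [int_testBit_succ'] at this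
    rw [hn, pow_succ, mul_comm ((2:ℤ)^i) 2]
    exact mul_dvd_mul_left 2 hd

private lemma odd_bodd {b : ℤ} (hb : Odd b) : b.bodd = true := by
  obtain ⟨k, rfl⟩ := hb
  simp [Int.bodd_add, Int.bodd_mul, Int.bodd_two]

/-- Vanishing of the low-order bits in lopsided division: `2^i` divides both `c i`
and `r i`, and consequently both sequences tend to `0` in `ℤ_[2]`; in particular the
borrow sequence converges to `0`. -/
theorem lopsided_division_tendsto_zero (a b : ℤ) (hb : Odd b) (c r : ℕ → ℤ)
    (hc0 : c 0 = a) (hr0 : r 0 = 0)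
    (hc : ∀ i, c (i + 1) =
      c i ^^^ r i ^^^ (if (c i).testBit i then 2 ^ i * b else 0))
    (hr : ∀ i, r (i + 1) =
      2 * (((~~~(c i)) &&& r i)
        ^^^ ((r i) &&& (if (c i).testBit i then 2 ^ i * b else 0))
        ^^^ ((if (c i).testBit i then 2 ^ i * b else 0) &&& (~~~(c i))))) :
    (∀ i : ℕ, (2 ^ i : ℤ) ∣ c i ∧ (2 ^ i : ℤ) ∣ r i) ∧
    Filter.Tendsto (fun i => ((c i : ℤ_[2]))) Filter.atTop (nhds 0) ∧
    Filter.Tendsto (fun i => ((r i : ℤ_[2]))) Filter.atTop (nhds 0) := by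
  -- key bit invariant
  have key : ∀ i : ℕ, (∀ j < i, (c i).testBit j = false) ∧
      (∀ j ≤ i, (r i).testBit j = false) := by
    intro i
    induction i with
    | zero =>
      refine ⟨fun j hj => absurd hj (by omega), fun j _ => ?_⟩
      rw [hr0]; exact int_testBit_zero_int j
    | succ i ih =>
      obtain ⟨h1, h2⟩ := ih
      set t : ℤ := if (c i).testBit i then 2 ^ i * b else 0 with ht
      have htlt : ∀ j < i, t.testBit j = false := by
        intro j hj
        rw [ht]; split
        · exact int_testBit_pow_mul_lt i b j hj
        · exact int_testBit_zero_int j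
      have hti : t.testBit i = (c i).testBit i := by
        rw [ht]; split
        · rename_i h; rw [int_testBit_pow_mul_self, odd_bodd hb, h]
        · rename_i h; rw [int_testBit_zero_int, eq_comm]; simpa using h
      constructor
      · intro j hj
        rw [hc i, int_xor_def, int_xor_def, Int.testBit_lxor, Int.testBit_lxor]
        rcases Nat.lt_or_ge j i with hji | hji
        · rw [h1 j hji, h2 j (by omega), htlt j hji]; rfl
        · have hji' : j = i := by omega
          subst hji'
          rw [h2 j le_rfl, hti]
          cases (c j).testBit j <;> rfl
      · intro j hj
        rw [hr i]
        cases j with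
        | zero => exact int_testBit_two_mul_zero _
        | succ k =>
          rw [int_testBit_two_mul_succ, int_xor_def, int_xor_def,
            Int.testBit_lxor, Int.testBit_lxor, int_and_def, int_and_def, int_and_def,
            Int.testBit_land, Int.testBit_land, Int.testBit_land,
            int_not_eq_lnot, Int.testBit_lnot]
          have hrk : (r i).testBit k = false := h2 k (by omega)
          rcases Nat.lt_or_ge k i with hki | hki
          · rw [hrk, htlt k hki]
            simp
          · have hki' : k = i := by omega
            subst hki'
            rw [hrk, hti]
            cases (c k).testBit k <;> rfl
  have hdvd : ∀ i : ℕ, (2 ^ i : ℤ) ∣ c i ∧ (2 ^ i : ℤ) ∣ r i := by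
    intro i
    exact ⟨int_two_pow_dvd_of_testBit i _ (key i).1,
      int_two_pow_dvd_of_testBit i _ fun j hj => (key i).2 j (by omega)⟩
  have hlim : Filter.Tendsto (fun i : ℕ => ((2 : ℝ) ^ i)⁻¹) Filter.atTop (nhds 0) := by
    have : (fun i : ℕ => ((2 : ℝ) ^ i)⁻¹) = fun i : ℕ => ((2 : ℝ)⁻¹) ^ i := by
      funext i; rw [inv_pow]
    rw [this]
    exact tendsto_pow_atTop_nhds_zero_of_lt_one (by norm_num) (by norm_num)
  refine ⟨hdvd, ?_, ?_⟩
  · apply squeeze_zero_norm (a := fun i => ((2 : ℝ) ^ i)⁻¹) _ hlim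
    intro n
    have := (PadicInt.norm_int_le_pow_iff_dvd (p := 2) (n := n)).mpr (hdvd n).1
    rw [zpow_neg, zpow_natCast] at this
    exact_mod_cast this
  · apply squeeze_zero_norm (a := fun i => ((2 : ℝ) ^ i)⁻¹) _ hlim
    intro n
    have := (PadicInt.norm_int_le_pow_iff_dvd (p := 2) (n := n)).mpr (hdvd n).2
    rw [zpow_neg, zpow_natCast] at this
    exact_mod_cast this
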